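/- Let U be a unipotent algebraic group over a field of characteristic zero, ψ an automorphism of U with ψ^r = id. If u ∈ U satisfies u * ψ(u) * ψ^2(u) * ... * ψ^{r-1}(u) = 1, then there exists v ∈ U with u = v^{-1} * ψ(v). -/

import Mathlib

open Subgroup
open scoped IsMulCommutative

section Aux
variable {U : Type*} [Group U]

private lemma center_apply (e : MulAut U) {z : U} (hz : z ∈ center U) :
    e z ∈ center U := by
  rw [Subgroup.mem_center_iff] at hz ⊢
  intro g
  have : g = e (e.symm g) := (e.apply_symm_apply g).symm
  rw [this, ← map_mul, ← map_mul, hz]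

private lemma root_central {k : ℕ}
    (hinj : Function.Injective fun u : U => u ^ k) {x : U}
    (hx : x ^ k ∈ center U) : x ∈ center U := by
  rw [Subgroup.mem_center_iff]
  intro g
  have h : (fun u : U => u ^ k) (g * x * g⁻¹) = (fun u : U => u ^ k) x := by
    simp only
    have h1 : (MulAut.conj g) (x ^ k) = ((MulAut.conj g) x) ^ k := map_pow _ _ _
    simp only [MulAut.conj_apply] at h1
    rw [← h1]
    have h2 := (Subgroup.mem_center_iff.mp hx) g
    rw [h2, mul_assoc, mul_inv_cancel, mul_one]
  have := hinj h
  calc g * x = g * x * g⁻¹ * g := by group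
  _ = x * g := by rw [this]

end Aux

private lemma comm_step {A : Type*} [CommGroup A] (χ : Monoid.End A) (r : ℕ)
    (z : A) (hfix : (χ ^ r) z = z)
    (hN : (∏ j ∈ Finset.range r, (χ ^ j) z) = 1) :
    χ (∏ j ∈ Finset.range r, ((χ ^ j) z) ^ j)
      = z ^ r * ∏ j ∈ Finset.range r, ((χ ^ j) z) ^ j := by
  have key : ∀ j, χ ((χ ^ j) z) = (χ ^ (j + 1)) z := by
    intro j; rw [pow_succ']; rfl
  set f : ℕ → A := fun i => ((χ ^ i) z) ^ i with hf
  set h : ℕ → A := fun i => (χ ^ i) z with hh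
  have hf0 : f 0 = 1 := by simp [hf]
  have hh0 : h 0 = z := by simp [hh]
  have hA : (∏ j ∈ Finset.range r, f (j + 1)) = (∏ j ∈ Finset.range r, f j) * z ^ r := by
    have := Finset.prod_range_succ' f r
    rw [hf0, mul_one] at this
    rw [← this, Finset.prod_range_succ]
    have : f r = z ^ r := by simp only [hf]; rw [hfix]
    rw [this]
  have hB : (∏ j ∈ Finset.range r, h (j + 1)) = 1 := by
    have h1 := Finset.prod_range_succ' h r
    rw [hh0] at h1
    rw [Finset.prod_range_succ] at h1
    have h2 : h r = z := by simp only [hh]; exact hfix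
    rw [h2, hN] at h1
    exact mul_right_cancel h1.symm
  calc χ (∏ j ∈ Finset.range r, ((χ ^ j) z) ^ j)
      = ∏ j ∈ Finset.range r, ((χ ^ (j + 1)) z) ^ j := by
        rw [map_prod]; exact Finset.prod_congr rfl fun j _ => by rw [map_pow, key]
    _ = ∏ j ∈ Finset.range r, (f (j + 1) * (h (j + 1))⁻¹) := by
        refine Finset.prod_congr rfl fun j _ => ?_
        simp only [hf, hh]
        rw [pow_succ ((χ ^ (j + 1)) z) j, mul_inv_cancel_right]
    _ = (∏ j ∈ Finset.range r, f (j + 1)) * (∏ j ∈ Finset.range r, h (j + 1))⁻¹ := by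
        rw [Finset.prod_mul_distrib, Finset.prod_inv_distrib]
    _ = z ^ r * ∏ j ∈ Finset.range r, ((χ ^ j) z) ^ j := by
        rw [hA, hB, inv_one, mul_one, mul_comm]

private lemma list_range_prod {M : Type*} [CommMonoid M] (f : ℕ → M) (n : ℕ) :
    ((List.range n).map f).prod = ∏ j ∈ Finset.range n, f j := by
  induction n with
  | zero => simp
  | succ n ih =>
    rw [List.range_succ, List.map_append, List.prod_append, Finset.prod_range_succ, ih]
    simp

private lemma central_shuffle {U : Type*} [Group U] {p : U}
    (hp : p ∈ Subgroup.center U) (a b c q : U) :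
    a * b * p * (b⁻¹ * c * q) = a * c * (p * q) := by
  have hpb : p * b⁻¹ = b⁻¹ * p := (Subgroup.mem_center_iff.mp hp b⁻¹).symm
  have hpc : p * c = c * p := (Subgroup.mem_center_iff.mp hp c).symm
  calc a * b * p * (b⁻¹ * c * q)
      = a * (b * (p * b⁻¹) * (c * q)) := by simp only [mul_assoc]
    _ = a * (b * (b⁻¹ * p) * (c * q)) := by rw [hpb]
    _ = a * (p * (c * q)) := by rw [mul_inv_cancel_left]
    _ = a * ((p * c) * q) := by simp only [mul_assoc]
    _ = a * c * (p * q) := by rw [hpc]; simp only [mul_assoc]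

universe u

private theorem aux_h1 : ∀ (n : ℕ) (U : Type u) [Group U] [Group.IsNilpotent U],
    Group.nilpotencyClass U ≤ n →
    (∀ k : ℕ, 0 < k → Function.Bijective fun u : U => u ^ k) →
    ∀ (ψ : MulAut U) (r : ℕ), 0 < r → ψ ^ r = 1 →
    ∀ u : U, ((List.range r).map fun j => (ψ ^ j) u).prod = 1 →
    ∃ v : U, u = v⁻¹ * ψ v := by
  intro n
  induction n with
  | zero =>
    intro U _ _ hc _ ψ r _ _ u _
    have : Subsingleton U := nilpotencyClass_zero_iff_subsingleton.mp (Nat.le_zero.mp hc)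
    exact ⟨1, Subsingleton.elim _ _⟩
  | succ n ih =>
    intro U _ _ hc hdiv ψ r hr hψ u hu
    set Z := Subgroup.center U with hZ
    -- the quotient
    have hmap : Z.map ψ.toMonoidHom = Z :=
      Subgroup.characteristic_iff_map_eq.mp inferInstance ψ
    set ψQ : MulAut (U ⧸ Z) := QuotientGroup.congr Z Z ψ hmap with hψQ
    have hQmk : ∀ x : U, ψQ (QuotientGroup.mk x) = QuotientGroup.mk (ψ x) :=
      fun x => QuotientGroup.congr_mk Z Z ψ hmap x
    have hpow : ∀ (j : ℕ) (x : U),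
        (ψQ ^ j) (QuotientGroup.mk x) = QuotientGroup.mk ((ψ ^ j) x) := by
      intro j
      induction j with
      | zero => intro x; simp
      | succ j hj =>
        intro x
        rw [pow_succ', pow_succ', MulAut.mul_apply, MulAut.mul_apply, hj, hQmk]
    -- nilpotency class drops
    have hcQ : Group.nilpotencyClass (U ⧸ Z) ≤ n := by
      show Group.nilpotencyClass (U ⧸ Subgroup.center U) ≤ n
      rw [nilpotencyClass_quotient_center]
      omega
    -- bijectivity of power maps on the quotient
    have hdivQ : ∀ k : ℕ, 0 < k → Function.Bijective fun q : U ⧸ Z => q ^ k := by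
      intro k hk
      constructor
      · intro a b hab
        obtain ⟨x, rfl⟩ := QuotientGroup.mk_surjective a
        obtain ⟨y, rfl⟩ := QuotientGroup.mk_surjective b
        simp only [← QuotientGroup.mk_pow] at hab
        have hz1 : (QuotientGroup.mk ((x ^ k)⁻¹ * y ^ k) : U ⧸ Z) = 1 := by
          rw [QuotientGroup.mk_mul, QuotientGroup.mk_inv, hab]
          group
        have hzZ : (x ^ k)⁻¹ * y ^ k ∈ Z := (QuotientGroup.eq_one_iff _).mp hz1
        obtain ⟨c, hc⟩ := (hdiv k hk).2 ((x ^ k)⁻¹ * y ^ k)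
        simp only at hc
        have hcZ : c ∈ Z := root_central (hdiv k hk).1 (hc ▸ hzZ)
        have hcom : Commute x c := Subgroup.mem_center_iff.mp hcZ x
        have hyk : y ^ k = (x * c) ^ k := by
          rw [hcom.mul_pow, hc]
          group
        have hxy : y = x * c := (hdiv k hk).1 hyk
        rw [hxy, QuotientGroup.mk_mul, (QuotientGroup.eq_one_iff c).mpr hcZ, mul_one]
      · intro q
        obtain ⟨x, rfl⟩ := QuotientGroup.mk_surjective q
        obtain ⟨y, hy⟩ := (hdiv k hk).2 x
        simp only at hy
        exact ⟨QuotientGroup.mk y, by simp only [← QuotientGroup.mk_pow]; rw [hy]⟩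
    -- ψQ has order dividing r
    have hψQr : ψQ ^ r = 1 := by
      ext q
      obtain ⟨x, rfl⟩ := QuotientGroup.mk_surjective q
      rw [hpow r x, hψ]
      rfl
    -- the cocycle condition in the quotient
    have huQ : ((List.range r).map fun j => (ψQ ^ j) (QuotientGroup.mk u)).prod = 1 := by
      have hfun : (fun j => (ψQ ^ j) (QuotientGroup.mk u : U ⧸ Z))
          = (QuotientGroup.mk' Z) ∘ (fun j => (ψ ^ j) u) := funext fun j => hpow j u
      rw [hfun, ← List.map_map, ← map_list_prod, hu, map_one]
    -- apply the induction hypothesis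
    obtain ⟨vb, hvb⟩ := ih (U ⧸ Z) hcQ hdivQ ψQ r hr hψQr (QuotientGroup.mk u) huQ
    obtain ⟨v, rfl⟩ := QuotientGroup.mk_surjective vb
    -- the error term z is central
    set z : U := v * u * (ψ v)⁻¹ with hzdef
    have hzZ : z ∈ Z := by
      apply (QuotientGroup.eq_one_iff z).mp
      rw [hzdef, QuotientGroup.mk_mul, QuotientGroup.mk_mul, QuotientGroup.mk_inv, ← hQmk v,
        hvb]
      group
    have hu2 : u = v⁻¹ * z * ψ v := by rw [hzdef]; group
    have hzjZ : ∀ j : ℕ, (ψ ^ j) z ∈ Z := fun j => center_apply (ψ ^ j) hzZ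
    -- telescoping: the norm of z is 1
    have htel : ∀ m : ℕ, ((List.range m).map fun j => (ψ ^ j) u).prod
        = v⁻¹ * (ψ ^ m) v * ((List.range m).map fun j => (ψ ^ j) z).prod := by
      intro m
      induction m with
      | zero => simp
      | succ m hm =>
        rw [List.range_succ, List.map_append, List.map_append, List.prod_append,
          List.prod_append, hm]
        simp only [List.map_singleton, List.prod_singleton]
        have hPm : ((List.range m).map fun j => (ψ ^ j) z).prod ∈ Z := by
          apply Subgroup.list_prod_mem
          intro x hx
          obtain ⟨j, _, rfl⟩ := List.mem_map.mp hx
          exact hzjZ j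
        have hpsucc : (ψ ^ (m + 1)) v = (ψ ^ m) (ψ v) := by
          rw [pow_succ, MulAut.mul_apply]
        have hu3 : u = v⁻¹ * ψ v * z := by
          have hcz : ψ v * z = z * ψ v := Subgroup.mem_center_iff.mp hzZ (ψ v)
          rw [hu2, mul_assoc, ← hcz, ← mul_assoc]
        have hmu : (ψ ^ m) u = ((ψ ^ m) v)⁻¹ * (ψ ^ (m + 1)) v * (ψ ^ m) z := by
          rw [hu3, map_mul, map_mul, map_inv, hpsucc]
        rw [hmu]
        exact central_shuffle hPm v⁻¹ ((ψ ^ m) v) ((ψ ^ (m + 1)) v) ((ψ ^ m) z)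
    -- the norm of z is trivial
    have hNz : ((List.range r).map fun j => (ψ ^ j) z).prod = 1 := by
      have h5 := htel r
      rw [hu, hψ] at h5
      simpa using h5.symm
    -- solve the abelian problem in the center
    haveI : IsMulCommutative Z := inferInstanceAs (IsMulCommutative (Subgroup.center U))
    let χ : Monoid.End Z :=
      { toFun := fun a => ⟨ψ (a : U), center_apply ψ a.2⟩,
        map_one' := by ext; simp,
        map_mul' := fun a b => by ext; simp }
    have hχapp : ∀ a : Z, ((χ a : Z) : U) = ψ (a : U) := fun a => rfl
    have hχpow : ∀ (j : ℕ) (a : Z), (((χ ^ j) a : Z) : U) = (ψ ^ j) (a : U) := by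
      intro j
      induction j with
      | zero => intro a; simp
      | succ j hj =>
        intro a
        rw [pow_succ', pow_succ', MulAut.mul_apply]
        rw [show ((χ * χ ^ j) a : Z) = χ ((χ ^ j) a) from rfl, hχapp, hj]
    set z' : Z := ⟨z, hzZ⟩ with hz'
    have hfix : (χ ^ r) z' = z' := by
      apply Subtype.ext
      rw [hχpow r z', hψ]
      rfl
    have hNfin : (∏ j ∈ Finset.range r, (χ ^ j) z') = 1 := by
      apply Subtype.ext
      have h6 : (((∏ j ∈ Finset.range r, (χ ^ j) z' : Z) : U)) = 1 := by
        rw [← list_range_prod (fun j => (χ ^ j) z') r]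
        rw [show ((((List.range r).map fun j => (χ ^ j) z').prod : Z) : U)
            = (((List.range r).map fun j => (χ ^ j) z').map Z.subtype).prod from
          map_list_prod Z.subtype _, List.map_map]
        rw [show (Z.subtype ∘ fun j => (χ ^ j) z') = fun j => (ψ ^ j) z from
          funext fun j => hχpow j z']
        exact hNz
      rw [h6]
      rfl
    set t' : Z := ∏ j ∈ Finset.range r, ((χ ^ j) z') ^ j with ht'
    have hkey : χ t' = z' ^ r * t' := comm_step χ r z' hfix hNfin
    obtain ⟨craw, hcraw⟩ := (hdiv r hr).2 (t' : U)
    simp only at hcraw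
    have hcrawZ : craw ∈ Z := root_central (hdiv r hr).1
      (show craw ^ r ∈ Subgroup.center U by rw [hcraw]; exact t'.2)
    set c' : Z := ⟨craw, hcrawZ⟩ with hc'
    have hc'r : c' ^ r = t' := by
      apply Subtype.ext
      simp [hc', hcraw]
    have hfinal : (χ c' * c'⁻¹) ^ r = z' ^ r := by
      rw [mul_pow, ← map_pow, inv_pow, hc'r, hkey, mul_inv_cancel_right]
    have hinU : (ψ craw * craw⁻¹) ^ r = z ^ r := by
      have h10 := congrArg (Subtype.val) hfinal
      exact h10
    have hzeq : ψ craw * craw⁻¹ = z := (hdiv r hr).1 hinU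
    -- assemble the final answer
    refine ⟨v * craw, ?_⟩
    have hcen : ∀ {x : U}, x ∈ Z → ∀ g : U, g * x = x * g :=
      fun hx g => Subgroup.mem_center_iff.mp hx g
    have hp : craw⁻¹ ∈ Z := Z.inv_mem hcrawZ
    have hu3 : u = v⁻¹ * ψ v * z := by
      have hcz : ψ v * z = z * ψ v := hcen hzZ (ψ v)
      rw [hu2, mul_assoc, ← hcz, ← mul_assoc]
    rw [mul_inv_rev, map_mul]
    have e1 : craw⁻¹ * v⁻¹ * (ψ v * ψ craw) = v⁻¹ * ψ v * (ψ craw * craw⁻¹) := by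
      have h9 : craw⁻¹ * (v⁻¹ * (ψ v * ψ craw)) = v⁻¹ * (ψ v * ψ craw) * craw⁻¹ :=
        (hcen hp (v⁻¹ * (ψ v * ψ craw))).symm
      calc craw⁻¹ * v⁻¹ * (ψ v * ψ craw)
          = craw⁻¹ * (v⁻¹ * (ψ v * ψ craw)) := by simp only [mul_assoc]
        _ = v⁻¹ * (ψ v * ψ craw) * craw⁻¹ := h9
        _ = v⁻¹ * ψ v * (ψ craw * craw⁻¹) := by simp only [mul_assoc]
    rw [e1, hzeq]
    exact hu3

/-- Vanishing of nonabelian `H¹` of a finite cyclic group acting on a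
unipotent group in characteristic zero.

A unipotent algebraic group over a field of characteristic zero is modeled by
its group of points: a nilpotent group in which extraction of `k`-th roots is
uniquely possible for every `k > 0` (a Malcev/`ℚ`-powered nilpotent group).

If `ψ` is an automorphism of `U` with `ψ^r = id` and `u ∈ U` satisfies
`u · ψ(u) · ψ²(u) · ⋯ · ψ^{r-1}(u) = 1`, then `u = v⁻¹ · ψ(v)` for some `v`. -/
theorem unipotent_h1_vanishing (U : Type*) [Group U] [Group.IsNilpotent U]
    (hdiv : ∀ k : ℕ, 0 < k → Function.Bijective fun u : U => u ^ k)
    (ψ : MulAut U) (r : ℕ) (hr : 0 < r) (hψ : ψ ^ r = 1)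
    (u : U) (hu : ((List.range r).map fun j => (ψ ^ j) u).prod = 1) :
    ∃ v : U, u = v⁻¹ * ψ v :=
  aux_h1 (Group.nilpotencyClass U) U le_rfl hdiv ψ r hr hψ u hu
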